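/- Error Factor Test: let a ∈ F[x] with deg a < K, let Y = a + E, let t_D = ⌊(N−K)/2⌋, let G ∈ F[x] be nonzero, and set Z = (G·Y) mod M_n. Assume: (1) deg Λ_f ≤ t_D; (2) deg G ≤ t_D; (3) G divides Z; (4) deg Z − deg G < K (i.e., deg Z < deg G + K). Then Λ_f divides G and Z = G·a. -/

import Mathlib

open Polynomial Finset

/-- Error Factor Test: with `t_D = ⌊(N−K)/2⌋` and `Z = (G·Y) mod Mₙ`, if
(1) `deg Λ_f ≤ t_D`, (2) `deg G ≤ t_D`, (3) `G ∣ Z`, (4) `deg Z < deg G + K`,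
then `Λ_f ∣ G` and `Z = G·a`. -/
theorem error_factor_test
    {F : Type*} [Field F] [DecidableEq F] (n : ℕ) (hn : 1 ≤ n)
    (m : Fin n → F[X])
    (hmonic : ∀ i, (m i).Monic)
    (hdeg : ∀ i, 1 ≤ (m i).natDegree)
    (hcop : ∀ i j, i ≠ j → IsCoprime (m i) (m j))
    (k : ℕ) (hk1 : 1 ≤ k) (hkn : k ≤ n)
    (N K : ℕ)
    (hN : N = (∏ i, m i).natDegree)
    (hK : K = (∏ i ∈ Finset.univ.filter (fun i : Fin n => (i : ℕ) < k), m i).natDegree)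
    (Mn : F[X]) (hMn : Mn = ∏ i, m i)
    (E : F[X]) (hE0 : E ≠ 0) (hEdeg : E.degree < Mn.degree)
    (Λf : F[X]) (hΛf : Λf = Mn / gcd E Mn)
    (a : F[X]) (ha : a.degree < (K : WithBot ℕ))
    (G : F[X]) (hG0 : G ≠ 0)
    (Z : F[X]) (hZ : Z = (G * (a + E)) %ₘ Mn)
    (h1 : Λf.natDegree ≤ (N - K) / 2)
    (h2 : G.natDegree ≤ (N - K) / 2)
    (h3 : G ∣ Z)
    (h4 : Z.natDegree < G.natDegree + K) :
    Λf ∣ G ∧ Z = G * a := by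
  have hMn_monic : Mn.Monic := by
    rw [hMn]; exact monic_prod_of_monic _ _ fun i _ => hmonic i
  have hMn0 : Mn ≠ 0 := hMn_monic.ne_zero
  have hNdeg : Mn.natDegree = N := by rw [hN, hMn]
  have hKN : K ≤ N := by
    rw [hN, hK, natDegree_prod _ _ (fun i _ => (hmonic i).ne_zero),
        natDegree_prod _ _ (fun i _ => (hmonic i).ne_zero)]
    exact Finset.sum_le_sum_of_subset (Finset.filter_subset _ _)
  set g := gcd E Mn with hg
  have hg0 : g ≠ 0 := by
    intro h
    exact hE0 ((gcd_eq_zero_iff E Mn).mp h).1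
  have hΛg : g * Λf = Mn := by
    rw [hΛf]; exact EuclideanDomain.mul_div_cancel' hg0 (gcd_dvd_right E Mn)
  have hΛ0 : Λf ≠ 0 := by
    intro h; rw [h, mul_zero] at hΛg; exact hMn0 hΛg.symm
  set e := E / g with he
  have hge : g * e = E := EuclideanDomain.mul_div_cancel' hg0 (gcd_dvd_left E Mn)
  have hcoe : IsCoprime e Λf := by
    have := isCoprime_div_gcd_div_gcd (p := E) (q := Mn) hMn0
    rwa [← hg, ← he, ← hΛf] at this
  set q := (G * (a + E)) /ₘ Mn with hq
  have hsplit : Z + Mn * q = G * (a + E) := by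
    rw [hZ, hq]; exact modByMonic_add_div _ _
  -- the key algebraic identity
  have hdvd : Λf * (Z - G * a) = Mn * (e * G - Λf * q) := by
    linear_combination Λf * hsplit - Λf * G * hge + e * G * hΛg
  -- degree bounds
  have hZdeg : Z.degree < ((G.natDegree + K : ℕ) : WithBot ℕ) := by
    rcases eq_or_ne Z 0 with h | h
    · rw [h, degree_zero]; exact WithBot.bot_lt_coe _
    · rw [degree_eq_natDegree h]; exact_mod_cast h4
  have hGadeg : (G * a).degree < ((G.natDegree + K : ℕ) : WithBot ℕ) := by
    rcases eq_or_ne a 0 with h | h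
    · rw [h, mul_zero, degree_zero]; exact WithBot.bot_lt_coe _
    · rw [degree_mul, degree_eq_natDegree hG0]
      have : (G.natDegree : WithBot ℕ) + a.degree <
          (G.natDegree : WithBot ℕ) + (K : WithBot ℕ) := by
        exact WithBot.add_lt_add_left (by simp) ha
      simpa [Nat.cast_add] using this
  have hsub : (Z - G * a).degree < ((G.natDegree + K : ℕ) : WithBot ℕ) :=
    lt_of_le_of_lt (degree_sub_le _ _) (max_lt hZdeg hGadeg)
  have hbig : (Λf * (Z - G * a)).degree < Mn.degree := by
    have hMndeg : Mn.degree = (N : WithBot ℕ) := by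
      rw [degree_eq_natDegree hMn0, hNdeg]
    rcases eq_or_ne (Z - G * a) 0 with h | h
    · rw [h, mul_zero, degree_zero, hMndeg]; exact WithBot.bot_lt_coe _
    · rw [degree_mul, degree_eq_natDegree hΛ0, hMndeg]
      have hle : Λf.natDegree + (G.natDegree + K) ≤ N := by omega
      calc (Λf.natDegree : WithBot ℕ) + (Z - G * a).degree
          < (Λf.natDegree : WithBot ℕ) + ((G.natDegree + K : ℕ) : WithBot ℕ) :=
            WithBot.add_lt_add_left (by simp) hsub
        _ = ((Λf.natDegree + (G.natDegree + K) : ℕ) : WithBot ℕ) := by push_cast; ring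
        _ ≤ (N : WithBot ℕ) := by exact_mod_cast hle
  have hzero : Λf * (Z - G * a) = 0 :=
    eq_zero_of_dvd_of_degree_lt ⟨e * G - Λf * q, hdvd⟩ hbig
  have hZa : Z = G * a := by
    rcases mul_eq_zero.mp hzero with h | h
    · exact absurd h hΛ0
    · exact sub_eq_zero.mp h
  have hGE : G * e = Λf * q := by
    have h5 : g * (G * e) = g * (Λf * q) := by
      linear_combination G * hge - hsplit + hZa - q * hΛg
    exact mul_left_cancel₀ hg0 h5
  exact ⟨hcoe.symm.dvd_of_dvd_mul_right ⟨q, hGE⟩, hZa⟩
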